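/- Let X be a lattice with an automorphism g of finite order. The fixed point set T^g of the induced action on T = Hom(X, ℂ×) has nonempty intersection with the compact torus T_u = Hom(X, S¹); indeed every connected component of T^g meets T_u. -/

import Mathlib

/-- The fixed point set `T^g ⊆ (ℂˣ)ⁿ ⊆ ℂⁿ` of the torus automorphism induced by a
lattice automorphism `g ∈ GL(n, ℤ)`. -/
def torusFixed (n : ℕ) (g : Matrix.GeneralLinearGroup (Fin n) ℤ) : Set (Fin n → ℂ) :=
  {t | (∀ i, t i ≠ 0) ∧
    ∀ i, (∏ j, t j ^ ((g : Matrix (Fin n) (Fin n) ℤ) i j)) = t i}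

/-- For a finite order lattice automorphism `g` of `X = ℤⁿ`, the fixed point set `T^g`
of the induced action on `T = Hom(X, ℂˣ)` has nonempty intersection with the compact
torus `T_u = Hom(X, S¹)` (elements all of whose coordinates have absolute value `1`);
indeed every connected component of `T^g` meets `T_u`. -/
theorem fixedPoints_meet_compact_torus (n : ℕ)
    (g : Matrix.GeneralLinearGroup (Fin n) ℤ) (hg : IsOfFinOrder g) :
    ((torusFixed n g) ∩ {t : Fin n → ℂ | ∀ i, ‖t i‖ = 1}).Nonempty ∧
    ∀ t ∈ torusFixed n g,
      ∃ s ∈ connectedComponentIn (torusFixed n g) t, ∀ i, ‖s i‖ = 1 := by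
  constructor
  · exact ⟨fun _ => 1, ⟨fun i => one_ne_zero, fun i => by simp⟩, fun i => by simp⟩
  · intro t ht
    obtain ⟨ht0, htf⟩ := ht
    set m : Matrix (Fin n) (Fin n) ℤ := (g : Matrix (Fin n) (Fin n) ℤ) with hm
    set u : Fin n → ℝ := fun i => ‖t i‖ with hu
    have hu0 : ∀ i, 0 < u i := fun i => by
      simp only [hu, norm_pos_iff]; exact ht0 i
    have huf : ∀ i, (∏ j, u j ^ (m i j)) = u i := by
      intro i
      have := congrArg (‖·‖) (htf i)
      simpa [norm_prod, norm_zpow, hu] using this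
    set γ : ℝ → (Fin n → ℂ) := fun r i => t i * ((u i ^ (-r) : ℝ) : ℂ) with hγ
    have hγ0 : γ 0 = t := by
      funext i; simp [hγ]
    have hmem : ∀ r, γ r ∈ torusFixed n g := by
      intro r
      refine ⟨fun i => ?_, fun i => ?_⟩
      · simp only [hγ, mul_ne_zero_iff]
        exact ⟨ht0 i, by
          simp only [ne_eq, Complex.ofReal_eq_zero]
          exact (Real.rpow_pos_of_pos (hu0 i) _).ne'⟩
      · have key : ∀ j, (γ r j) ^ (m i j)
            = t j ^ (m i j) * (((u j ^ (m i j) : ℝ) ^ (-r) : ℝ) : ℂ) := by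
          intro j
          have h1 : ((u j ^ (-r) : ℝ) : ℂ) ^ (m i j)
              = (((u j ^ (-r) : ℝ) ^ (m i j) : ℝ) : ℂ) := by
            push_cast; ring
          have h2 : (u j ^ (-r) : ℝ) ^ (m i j) = (u j ^ (m i j)) ^ (-r) := by
            rw [← Real.rpow_intCast (u j ^ (-r)) (m i j), ← Real.rpow_mul (hu0 j).le,
              mul_comm, Real.rpow_mul (hu0 j).le, Real.rpow_intCast]
          simp only [hγ, mul_zpow, h1, h2]
        calc (∏ j, (γ r j) ^ (m i j))
            = (∏ j, t j ^ (m i j)) * (∏ j, (((u j ^ (m i j) : ℝ) ^ (-r) : ℝ) : ℂ)) := by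
              rw [← Finset.prod_mul_distrib]; exact Finset.prod_congr rfl fun j _ => key j
          _ = t i * (((∏ j, (u j ^ (m i j) : ℝ) ^ (-r)) : ℝ) : ℂ) := by
              rw [htf i]; push_cast; ring
          _ = γ r i := by
              rw [Real.finset_prod_rpow _ _ (fun j _ => by positivity) (-r), huf i]
    have hcont : Continuous γ := by
      refine continuous_pi fun i => Continuous.mul continuous_const ?_
      refine Complex.continuous_ofReal.comp ?_
      have : (fun r : ℝ => u i ^ (-r)) = fun r : ℝ => Real.exp (Real.log (u i) * (-r)) := by
        funext r; rw [Real.rpow_def_of_pos (hu0 i)]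
      rw [this]
      exact Real.continuous_exp.comp (by continuity)
    have hpre : IsPreconnected (Set.range γ) := by
      rw [← Set.image_univ]
      exact isPreconnected_univ.image γ hcont.continuousOn
    have hsub : Set.range γ ⊆ torusFixed n g := by
      rintro _ ⟨r, rfl⟩; exact hmem r
    have hrange : Set.range γ ⊆ connectedComponentIn (torusFixed n g) t := by
      have := hpre.subset_connectedComponentIn (x := t) ⟨0, hγ0⟩ hsub
      exact this
    refine ⟨γ 1, hrange ⟨1, rfl⟩, fun i => ?_⟩
    simp only [hγ, norm_mul, Complex.norm_real, Real.norm_eq_abs]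
    rw [abs_of_pos (Real.rpow_pos_of_pos (hu0 i) _)]
    rw [Real.rpow_neg_one]
    exact mul_inv_cancel₀ (hu0 i).ne'
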